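/- Let Λ ∈ ℝ and let P(ζ) = 1 + (Λ/2)ζζ̄. Let g(ζ) = a₀ + a₁ζ + a₂ζ² with a₀,a₁,a₂ ∈ ℂ, and set W = P^{−2}·conj(g)(ζ̄). Then P³·(∂_ζ̄ W − ∂_ζ conj(W)) = (1 − (Λ/2)ζζ̄)(ā₁ − a₁) + ζ̄(2ā₂ + Λa₀) − ζ(2a₂ + Λā₀), wherever P ≠ 0. -/

import Mathlib

/-- Wirtinger derivative `∂_ζ = (∂_x − i∂_y)/2`. -/
noncomputable def wD (f : ℂ → ℂ) (z : ℂ) : ℂ :=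
  (fderiv ℝ f z 1 - Complex.I * fderiv ℝ f z Complex.I) / 2

/-- Wirtinger derivative `∂_ζ̄ = (∂_x + i∂_y)/2`. -/
noncomputable def wDbar (f : ℂ → ℂ) (z : ℂ) : ℂ :=
  (fderiv ℝ f z 1 + Complex.I * fderiv ℝ f z Complex.I) / 2

set_option maxHeartbeats 1600000 in
/-- The twist-like quantity of the Kundt metric function `W = P⁻² ḡ(ζ̄)`
for `g` quadratic in `ζ` (the subclass with `DΨ₄ = 0`):
`P³ (∂_ζ̄ W − ∂_ζ W̄) = (1 − (Λ/2)ζζ̄)(ā₁ − a₁) + ζ̄(2ā₂ + Λa₀) − ζ(2a₂ + Λā₀)`. -/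
theorem W_twist_identity (Λ : ℝ) (a₀ a₁ a₂ : ℂ)
    (P : ℂ → ℂ) (hP : ∀ z, P z = 1 + (Λ / 2 : ℂ) * z * (starRingEnd ℂ) z)
    (W : ℂ → ℂ)
    (hW : ∀ z, W z = ((P z) ^ 2)⁻¹ *
      ((starRingEnd ℂ) a₀ + (starRingEnd ℂ) a₁ * (starRingEnd ℂ) z
        + (starRingEnd ℂ) a₂ * ((starRingEnd ℂ) z) ^ 2))
    (z : ℂ) (hz : P z ≠ 0) :
    (P z) ^ 3 * (wDbar W z - wD (fun w => (starRingEnd ℂ) (W w)) z)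
      = (1 - (Λ / 2 : ℂ) * z * (starRingEnd ℂ) z) * ((starRingEnd ℂ) a₁ - a₁)
        + (starRingEnd ℂ) z * (2 * (starRingEnd ℂ) a₂ + (Λ : ℂ) * a₀)
        - z * (2 * a₂ + (Λ : ℂ) * (starRingEnd ℂ) a₀) := by
  set c : ℂ := (Λ / 2 : ℂ) with hc
  have hWfun : W = fun w => ((1 + c * (w * (starRingEnd ℂ) w)) * (1 + c * (w * (starRingEnd ℂ) w)))⁻¹ *
      ((starRingEnd ℂ) a₀ + (starRingEnd ℂ) a₁ * (starRingEnd ℂ) w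
        + (starRingEnd ℂ) a₂ * ((starRingEnd ℂ) w * (starRingEnd ℂ) w)) := by
    funext w
    rw [hW, hP]
    ring_nf
  have hAz : (1 + c * (z * (starRingEnd ℂ) z)) ≠ 0 := by
    rw [hP] at hz; intro h; apply hz; rw [← h]; ring
  have hconj : ∀ x : ℂ, HasFDerivAt (fun w : ℂ => (starRingEnd ℂ) w)
      (Complex.conjCLE : ℂ →L[ℝ] ℂ) x := fun x => Complex.conjCLE.hasFDerivAt
  have hA : HasFDerivAt (fun w : ℂ => 1 + c * (w * (starRingEnd ℂ) w))
      ((c • (z • (Complex.conjCLE : ℂ →L[ℝ] ℂ) + (starRingEnd ℂ) z • ContinuousLinearMap.id ℝ ℂ))) z := by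
    exact (((hasFDerivAt_id z).mul (hconj z)).const_mul c).const_add 1
  have hA2 : HasFDerivAt (fun w : ℂ => (1 + c * (w * (starRingEnd ℂ) w)) * (1 + c * (w * (starRingEnd ℂ) w)))
      ((1 + c * (z * (starRingEnd ℂ) z)) • (c • (z • (Complex.conjCLE : ℂ →L[ℝ] ℂ) + (starRingEnd ℂ) z • ContinuousLinearMap.id ℝ ℂ))
        + (1 + c * (z * (starRingEnd ℂ) z)) • (c • (z • (Complex.conjCLE : ℂ →L[ℝ] ℂ) + (starRingEnd ℂ) z • ContinuousLinearMap.id ℝ ℂ))) z :=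
    hA.mul hA
  have hA2z : (1 + c * (z * (starRingEnd ℂ) z)) * (1 + c * (z * (starRingEnd ℂ) z)) ≠ 0 :=
    mul_ne_zero hAz hAz
  have hinv := (hasFDerivAt_inv' (𝕜 := ℝ) hA2z).comp z hA2
  have hg : HasFDerivAt (fun w : ℂ => (starRingEnd ℂ) a₀ + (starRingEnd ℂ) a₁ * (starRingEnd ℂ) w
      + (starRingEnd ℂ) a₂ * ((starRingEnd ℂ) w * (starRingEnd ℂ) w))
      (((starRingEnd ℂ) a₁ • (Complex.conjCLE : ℂ →L[ℝ] ℂ) : ℂ →L[ℝ] ℂ)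
        + (starRingEnd ℂ) a₂ • ((starRingEnd ℂ) z • (Complex.conjCLE : ℂ →L[ℝ] ℂ) + (starRingEnd ℂ) z • (Complex.conjCLE : ℂ →L[ℝ] ℂ))) z :=
    (((hconj z).const_mul ((starRingEnd ℂ) a₁)).const_add _).add (((hconj z).mul (hconj z)).const_mul _)
  have hWd := hinv.mul hg
  simp only [Function.comp_def, Pi.mul_def] at hWd
  rw [← hWfun] at hWd
  have hWbar := (hconj (W z)).comp z hWd
  simp only [Function.comp_def] at hWbar
  have e1 := hWd.fderiv
  have e2 := hWbar.fderiv
  rw [wD, wDbar, e1, e2]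
  simp only [ContinuousLinearMap.add_apply, ContinuousLinearMap.smul_apply,
    ContinuousLinearMap.coe_comp', Function.comp_apply, ContinuousLinearMap.neg_apply,
    ContinuousLinearMap.mulLeftRight_apply, ContinuousLinearMap.id_apply,
    ContinuousLinearEquiv.coe_coe, Complex.conjCLE_apply, smul_eq_mul, map_one, Complex.conj_I, map_mul, map_add,
    map_neg, map_inv₀, Complex.conj_conj, map_one]
  have h3 : P z = 1 + c * (z * (starRingEnd ℂ) z) := by rw [hP]; ring
  rw [h3]
  have hcc : (starRingEnd ℂ) c = c := by
    rw [hc]; rw [map_div₀]; simp [Complex.conj_ofReal, map_ofNat]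
  rw [hcc]
  simp only [show ((starRingEnd ℂ) z) * z = z * (starRingEnd ℂ) z from mul_comm _ _]
  set A := 1 + c * (z * (starRingEnd ℂ) z) with hAdef
  have hgoalP : (1 : ℂ) - c * z * (starRingEnd ℂ) z = 2 - A := by rw [hAdef]; ring
  rw [hgoalP]
  have hL : (Λ : ℂ) = 2 * c := by rw [hc]; ring
  rw [hL]
  clear_value A
  clear_value c
  ring_nf
  simp only [Complex.I_sq]
  have hABn : (A : ℂ) ^ 10 * A⁻¹ ^ 10 = 1 := by
    rw [← mul_pow, mul_inv_cancel₀ hAz, one_pow]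
  field_simp [hAz]
  linear_combination (4 * ((starRingEnd ℂ) a₁ + (starRingEnd ℂ) a₂ * (starRingEnd ℂ) z - z * a₂ - a₁)) * hAdef
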